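/- arXiv:2106.00452 — 2 statements merged into one kernel-verified Lean document; each statement's English description precedes it below -/
import Mathlib

section
/- Let G be a connected labeled digraph over A. The Stallings equivalence ≡_S of G (the least equivalence relation on vertices closed under the folding rules) coincides with the equivalence relation relating x and y whenever there is a path from x to y in G whose label is the identity element of the free group F(A). -/
open List

section Prelude

variable {A V : Type*}

structure LDigraph (V A : Type*) where
  E : Set (V × A × V)

namespace LDigraph

inductive Step (G : LDigraph V A) : V → V → FreeGroup A → Prop
  | fwd {x a y} : (x, a, y) ∈ G.E → Step G x y (FreeGroup.of a)
  | bwd {x a y} : (x, a, y) ∈ G.E → Step G y x (FreeGroup.of a)⁻¹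

inductive PathLabel (G : LDigraph V A) : V → V → FreeGroup A → Prop
  | nil (x) : PathLabel G x x 1
  | cons {x y z g h} : G.Step x y g → PathLabel G y z h → PathLabel G x z (g * h)

inductive PosPath (G : LDigraph V A) : V → V → List A → Prop
  | nil (x) : PosPath G x x []
  | cons {x a y z w} : (x, a, y) ∈ G.E → PosPath G y z w → PosPath G x z (a :: w)

def loopLabels (G : LDigraph V A) (x : V) : Set (FreeGroup A) :=
  {g | G.PathLabel x x g}

def Connected (G : LDigraph V A) : Prop :=
  ∀ x y : V, ∃ g, G.PathLabel x y g

def quot (G : LDigraph V A) (r : Setoid V) : LDigraph (Quotient r) A :=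
  ⟨{e | ∃ x a y, (x, a, y) ∈ G.E ∧ e = (Quotient.mk r x, a, Quotient.mk r y)}⟩

def GroupPreserving (G : LDigraph V A) (r : Setoid V) : Prop :=
  ∀ x : V, G.loopLabels x = (G.quot r).loopLabels (Quotient.mk r x)

end LDigraph

/-- The image of a word in the free group. -/
def wordToFG (w : List A) : FreeGroup A := (w.map FreeGroup.of).prod

def FactorClosed (L : Set (List A)) : Prop := ∀ w ∈ L, ∀ u : List A, u <:+: w → u ∈ L

def Recurrent (L : Set (List A)) : Prop :=
  FactorClosed L ∧ ∀ u ∈ L, ∀ v ∈ L, ∃ w : List A, w ≠ [] ∧ u ++ w ++ v ∈ L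

def UniformlyRecurrent (L : Set (List A)) : Prop :=
  FactorClosed L ∧ ∀ u ∈ L, ∃ N : ℕ, ∀ w ∈ L, N ≤ w.length → u <:+: w

/-- The Rauzy graph `G_{m,k}`: vertices are the words of `L` of length `m`, and every
word `x ∈ L` of length `m+1` gives an edge from `init x` to `tail x` labeled `x(k)`. -/
def rauzy (L : Set (List A)) (m k : ℕ) : LDigraph (List A) A :=
  ⟨{e | ∃ x a, x ∈ L ∧ x.length = m + 1 ∧ x[k]? = some a ∧ e = (x.dropLast, a, x.tail)}⟩

/-- The extension graph `E(w)`, a bipartite graph on two copies of `A`. -/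
def extGraph (L : Set (List A)) (w : List A) : SimpleGraph (A ⊕ A) where
  Adj x y := ∃ a b, a :: (w ++ [b]) ∈ L ∧
    ((x = Sum.inl a ∧ y = Sum.inr b) ∨ (x = Sum.inr b ∧ y = Sum.inl a))
  symm := by constructor; rintro x y ⟨a, b, h, hc⟩; exact ⟨a, b, h, by tauto⟩
  loopless := by
    constructor
    rintro x ⟨a, b, h, ⟨h1, h2⟩ | ⟨h1, h2⟩⟩ <;> rw [h1] at h2 <;> exact absurd h2 (by simp)

/-- The set of genuine vertices of the extension graph of `w`. -/
def extVerts (L : Set (List A)) (w : List A) : Set (A ⊕ A) :=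
  Sum.elim (fun a => a :: w ∈ L) (fun b => w ++ [b] ∈ L)

/-- The extension graph of `w` is connected (all genuine vertices are mutually reachable). -/
def ExtConnected (L : Set (List A)) (w : List A) : Prop :=
  ∀ x ∈ extVerts L w, ∀ y ∈ extVerts L w, (extGraph L w).Reachable x y

/-- The extension graph of order `(d,d)` of the word `y`. -/
def extGraphK (L : Set (List A)) (d : ℕ) (y : List A) : SimpleGraph (List A ⊕ List A) where
  Adj p q := ∃ u v : List A, u.length = d ∧ v.length = d ∧ u ++ y ++ v ∈ L ∧
    ((p = Sum.inl u ∧ q = Sum.inr v) ∨ (p = Sum.inr v ∧ q = Sum.inl u))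
  symm := by constructor; rintro p q ⟨u, v, h1, h2, h3, hc⟩; exact ⟨u, v, h1, h2, h3, by tauto⟩
  loopless := by
    constructor
    rintro p ⟨u, v, _, _, _, ⟨h1, h2⟩ | ⟨h1, h2⟩⟩ <;> rw [h1] at h2 <;> exact absurd h2 (by simp)

/-- A language is suffix-connected if for every nonempty word `w ∈ L` there exists a depth
`1 ≤ d ≤ |w|+1` such that the natural embedding of the left extensions of `w` in the
extension graph `E_{d,d}(tail^{d-1} w)` lies in a single connected component. -/
def SuffixConnected (L : Set (List A)) : Prop :=
  ∀ w ∈ L, w ≠ [] → ∃ d : ℕ, 1 ≤ d ∧ d ≤ w.length + 1 ∧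
    ∀ a b : A, a :: w ∈ L → b :: w ∈ L →
      (extGraphK L d (w.drop (d - 1))).Reachable
        (Sum.inl (a :: w.take (d - 1))) (Sum.inl (b :: w.take (d - 1)))

open Classical in
/-- The number of occurrences of `u` in `w`. -/
noncomputable def occCount (u w : List A) : ℕ :=
  (List.range (w.length + 1)).countP fun i => decide (u <+: w.drop i)

/-- The return set `R_{u,v}`. -/
noncomputable def ReturnSet (L : Set (List A)) (u v : List A) : Set (List A) :=
  {r | r ∈ L ∧ u ++ r ++ v ∈ L ∧ (u ++ v) <+: (u ++ r ++ v) ∧ (u ++ v) <:+ (u ++ r ++ v) ∧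
    occCount (u ++ v) (u ++ r ++ v) = 2}

end Prelude

/-- The Stallings equivalence: the least equivalence relation on the vertices closed under
the folding rules (F) and (F'). -/
inductive StallingsRel {V A : Type*} (G : LDigraph V A) : V → V → Prop
  | refl (x) : StallingsRel G x x
  | symm {x y} : StallingsRel G x y → StallingsRel G y x
  | trans {x y z} : StallingsRel G x y → StallingsRel G y z → StallingsRel G x z
  | fold {x y x' y' u v : V} {a : A} : StallingsRel G x y → StallingsRel G u x' →
      StallingsRel G y' v → (x, a, x') ∈ G.E → (y, a, y') ∈ G.E → StallingsRel G u v
  | fold' {x y x' y' u v : V} {b : A} : StallingsRel G x y → StallingsRel G u x' →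
      StallingsRel G y' v → (x', b, x) ∈ G.E → (y', b, y) ∈ G.E → StallingsRel G u v

section Aux

variable {A V : Type*} {G : LDigraph V A}

/-- A single edge traversal labeled by a letter-with-sign. -/
inductive EStep (G : LDigraph V A) : V → V → A × Bool → Prop
  | fwd {p a q} : (p, a, q) ∈ G.E → EStep G p q (a, true)
  | bwd {p a q} : (p, a, q) ∈ G.E → EStep G q p (a, false)

/-- Paths up to Stallings equivalence, recording the word. -/
inductive PT (G : LDigraph V A) : V → V → List (A × Bool) → Prop
  | nil {x y} : StallingsRel G x y → PT G x y []
  | cons {x p q y ℓ w} : StallingsRel G x p → EStep G p q ℓ → PT G q y w →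
      PT G x y (ℓ :: w)

theorem PT.pre {x z y w} (h : StallingsRel G x z) (hp : PT G z y w) : PT G x y w := by
  cases hp with
  | nil h' => exact .nil (h.trans h')
  | cons h' st pt => exact .cons (h.trans h') st pt

theorem LDigraph.PathLabel.append {x y z g h} (h1 : G.PathLabel x y g) (h2 : G.PathLabel y z h) :
    G.PathLabel x z (g * h) := by
  induction h1 with
  | nil => simpa using h2
  | cons st _ ih => rw [mul_assoc]; exact .cons st (ih h2)

theorem LDigraph.Step.symm {x y g} (h : G.Step x y g) : G.Step y x g⁻¹ := by
  cases h with
  | fwd e => exact .bwd e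
  | bwd e => simpa using LDigraph.Step.fwd e

theorem LDigraph.PathLabel.symm {x y g} (h : G.PathLabel x y g) : G.PathLabel y x g⁻¹ := by
  induction h with
  | nil => simpa using LDigraph.PathLabel.nil _
  | cons st _ ih =>
    rw [mul_inv_rev]
    exact ih.append (by simpa using LDigraph.PathLabel.cons st.symm (.nil _))

theorem stallings_to_path {x y} (h : StallingsRel G x y) : G.PathLabel x y 1 := by
  induction h with
  | refl x => exact .nil x
  | symm _ ih => simpa using ih.symm
  | trans _ _ ih1 ih2 => simpa using ih1.append ih2
  | @fold x y x' y' u v a _ _ _ e1 e2 ih1 ih2 ih3 =>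
    have p : G.PathLabel u v (1 * ((FreeGroup.of a)⁻¹ * (1 * (FreeGroup.of a * 1)))) :=
      ih2.append (.cons (.bwd e1) (ih1.append (.cons (.fwd e2) ih3)))
    simpa using p
  | @fold' x y x' y' u v b _ _ _ e1 e2 ih1 ih2 ih3 =>
    have p : G.PathLabel u v (1 * (FreeGroup.of b * (1 * ((FreeGroup.of b)⁻¹ * 1)))) :=
      ih2.append (.cons (.fwd e1) (ih1.append (.cons (.bwd e2) ih3)))
    simpa using p

theorem path_to_PT {x y g} (h : G.PathLabel x y g) :
    ∃ w, PT G x y w ∧ FreeGroup.mk w = g := by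
  induction h with
  | nil x => exact ⟨[], .nil (.refl x), (FreeGroup.one_eq_mk).symm⟩
  | @cons x y z g h st _ ih =>
    obtain ⟨w, pt, hw⟩ := ih
    cases st with
    | @fwd x a y e =>
      refine ⟨(a, true) :: w, .cons (.refl _) (.fwd e) pt, ?_⟩
      rw [show ((a, true) :: w) = [(a, true)] ++ w from rfl, ← FreeGroup.mul_mk, hw]
      rfl
    | @bwd x a y e =>
      refine ⟨(a, false) :: w, .cons (.refl _) (.bwd e) pt, ?_⟩
      rw [show ((a, false) :: w) = [(a, false)] ++ w from rfl, ← FreeGroup.mul_mk, hw]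
      congr 1

theorem PT.cancel {x y a b w} (h : PT G x y ((a, b) :: (a, !b) :: w)) : PT G x y w := by
  cases h with
  | cons h1 st1 pt1 =>
    cases pt1 with
    | cons h2 st2 pt2 =>
      rename_i p q p' q'
      have key : StallingsRel G p q' := by
        cases b with
        | true =>
          cases st1 with
          | fwd e1 =>
            cases st2 with
            | bwd e2 => exact .fold' h2 (.refl _) (.refl _) e1 e2
        | false =>
          cases st1 with
          | bwd e1 =>
            cases st2 with
            | fwd e2 => exact .fold h2 (.refl _) (.refl _) e1 e2
      exact pt2.pre (h1.trans key)

theorem PT.red_step {x y w₁ w₂} (h : PT G x y w₁) (hs : FreeGroup.Red.Step w₁ w₂) :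
    PT G x y w₂ := by
  cases hs with
  | @not L₁ L₂ a b =>
    induction L₁ generalizing x with
    | nil => exact h.cancel
    | cons ℓ L₁ ih =>
      cases h with
      | cons h1 st pt => exact .cons h1 st (ih pt)

theorem PT.nil_rel {x y} (h : PT G x y []) : StallingsRel G x y := by
  cases h with
  | nil h => exact h

theorem PT.red {x y w} (h : PT G x y w) (hr : FreeGroup.Red w []) : StallingsRel G x y := by
  induction hr using Relation.ReflTransGen.head_induction_on with
  | refl => exact h.nil_rel
  | head hs _ ih => exact ih (h.red_step hs)

end Aux

/-- In a connected labeled digraph, the Stallings equivalence coincides with the relation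
"joined by a trivially-labeled path". -/
theorem stallingsRel_iff_pathLabel_one {V A : Type*} (G : LDigraph V A) (hG : G.Connected)
    (x y : V) : StallingsRel G x y ↔ G.PathLabel x y 1 := by
  constructor
  · exact stallings_to_path
  · intro h
    obtain ⟨w, pt, hw⟩ := path_to_PT h
    have : FreeGroup.Red w [] := by
      have hj := FreeGroup.Red.exact.mp (hw.trans FreeGroup.one_eq_mk)
      obtain ⟨c, h1, h2⟩ := hj
      rwa [FreeGroup.Red.nil_iff.mp h2] at h1
    exact pt.red this
end

section
/- Let L be a recurrent language on alphabet A containing A. In the Rauzy graph G_{1,1}, two letters a, b ∈ A are Stallings-equivalent if and only if a and b, viewed as left extensions of the empty word, lie in the same connected component of the extension graph E(ε). -/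
open List

section StallingsAux

variable {A : Type*} {L : Set (List A)}

lemma rauzy11_edge_iff {u : List A} {c : A} {v : List A} :
    (u, c, v) ∈ (rauzy L 1 1).E ↔ ∃ p, u = [p] ∧ v = [c] ∧ [p, c] ∈ L := by
  constructor
  · rintro ⟨x, d, hx, hlen, hget, heq⟩
    match x, hlen with
    | [p, q], _ =>
      change some q = some d at hget
      obtain rfl : q = d := by injection hget
      simp only [Prod.mk.injEq] at heq
      obtain ⟨h1, h2, h3⟩ := heq
      simp only [List.dropLast, List.tail] at h1 h3
      exact ⟨p, h1, by rw [h3, h2], by rwa [h2]⟩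
  · rintro ⟨p, rfl, rfl, hL⟩
    exact ⟨[p, c], c, hL, rfl, rfl, rfl⟩

lemma extGraph_adj_of_mem {p c : A} (h : [p, c] ∈ L) :
    (extGraph L ([] : List A)).Adj (Sum.inl p) (Sum.inr c) :=
  ⟨p, c, by simpa using h, Or.inl ⟨rfl, rfl⟩⟩

/-- The abbreviation for the component map composed with generators. -/
noncomputable def compFG (L : Set (List A)) (x : A ⊕ A) :
    FreeGroup (extGraph L ([] : List A)).ConnectedComponent :=
  FreeGroup.of ((extGraph L ([] : List A)).connectedComponentMk x)

/-- The homomorphism sending `of c` to `x_{[inr c]} * x_{[inl c]}⁻¹`. -/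
noncomputable def stallingsHom (L : Set (List A)) :
    FreeGroup A →* FreeGroup (extGraph L ([] : List A)).ConnectedComponent :=
  FreeGroup.lift fun c => compFG L (Sum.inr c) * (compFG L (Sum.inl c))⁻¹

lemma stallingsHom_path {u v : List A} {g : FreeGroup A}
    (hp : (rauzy L 1 1).PathLabel u v g) :
    ∀ a b : A, u = [a] → v = [b] →
      stallingsHom L g * compFG L (Sum.inl b) = compFG L (Sum.inl a) := by
  induction hp with
  | nil x =>
    rintro a b rfl h
    obtain rfl : a = b := by injection h
    simp
  | cons hs _ ih =>
    rintro a b rfl rfl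
    cases hs with
    | @fwd x c y he =>
      obtain ⟨p, hp1, rfl, hL⟩ := rauzy11_edge_iff.mp he
      obtain rfl : a = p := by injection hp1
      have hcomp : (extGraph L ([] : List A)).connectedComponentMk (Sum.inl a) =
          (extGraph L ([] : List A)).connectedComponentMk (Sum.inr c) :=
        SimpleGraph.ConnectedComponent.eq.mpr (extGraph_adj_of_mem hL).reachable
      rw [map_mul, mul_assoc, ih c b rfl rfl]
      simp only [stallingsHom, FreeGroup.lift_apply_of, compFG, hcomp]
      group
    | bwd he =>
      obtain ⟨p, rfl, hv, hL⟩ := rauzy11_edge_iff.mp he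
      injection hv with hc _
      subst hc
      have hcomp : (extGraph L ([] : List A)).connectedComponentMk (Sum.inl p) =
          (extGraph L ([] : List A)).connectedComponentMk (Sum.inr a) :=
        SimpleGraph.ConnectedComponent.eq.mpr (extGraph_adj_of_mem hL).reachable
      rw [map_mul, mul_assoc, ih p b rfl rfl]
      simp only [stallingsHom, map_inv, FreeGroup.lift_apply_of, compFG, hcomp]
      group

lemma pathLabel_congr {G : LDigraph (List A) A} {u v : List A} {g g' : FreeGroup A}
    (h : G.PathLabel u v g) (hg : g = g') : G.PathLabel u v g' := hg ▸ h

lemma walk_to_pathLabel {u v : A ⊕ A} (p : (extGraph L ([] : List A)).Walk u v) :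
    ∀ b : A, v = Sum.inl b →
      (rauzy L 1 1).PathLabel (Sum.elim (fun a => [a]) (fun c => [c]) u) [b]
        (Sum.elim (fun _ => (1 : FreeGroup A)) (fun c => (FreeGroup.of c)⁻¹) u) := by
  induction p with
  | nil =>
    rintro b rfl
    exact LDigraph.PathLabel.nil [b]
  | @cons x y z hadj p ih =>
    rintro b rfl
    obtain ⟨a', c', hmem, hor⟩ := hadj
    have hmem' : [a', c'] ∈ L := by simpa using hmem
    rcases hor with ⟨rfl, rfl⟩ | ⟨rfl, rfl⟩
    · -- x = inl a', y = inr c'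
      have step : (rauzy L 1 1).Step [a'] [c'] (FreeGroup.of c') :=
        LDigraph.Step.fwd (rauzy11_edge_iff.mpr ⟨a', rfl, rfl, hmem'⟩)
      have := LDigraph.PathLabel.cons step (ih b rfl)
      refine pathLabel_congr this ?_
      simp only [Sum.elim_inl, Sum.elim_inr]
      group
    · -- x = inr c', y = inl a'
      have step : (rauzy L 1 1).Step [c'] [a'] (FreeGroup.of c')⁻¹ :=
        LDigraph.Step.bwd (rauzy11_edge_iff.mpr ⟨a', rfl, rfl, hmem'⟩)
      have := LDigraph.PathLabel.cons step (ih b rfl)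
      refine pathLabel_congr this ?_
      simp only [Sum.elim_inl, Sum.elim_inr]
      group

end StallingsAux

/-- In the Rauzy graph `G_{1,1}`, two letters are Stallings-equivalent (joined by a
trivially-labeled path) iff, as left extensions of the empty word, they lie in the same
connected component of the extension graph of the empty word. -/
theorem stallings_G11_iff_component {A : Type*} (L : Set (List A)) (hrec : Recurrent L)
    (hA : ∀ a : A, [a] ∈ L) (a b : A) :
    (rauzy L 1 1).PathLabel [a] [b] 1 ↔
      (extGraph L ([] : List A)).Reachable (Sum.inl a) (Sum.inl b) := by
  constructor
  · intro hp
    have h := stallingsHom_path hp a b rfl rfl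
    rw [map_one, one_mul] at h
    simp only [compFG] at h
    exact SimpleGraph.ConnectedComponent.eq.mp (FreeGroup.of_injective h.symm)
  · rintro ⟨p⟩
    exact walk_to_pathLabel p b rfl
end
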